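/- arXiv:2112.14060 — 4 statements merged into one kernel-verified Lean document; each statement's English description precedes it below -/
import Mathlib

section
/- For all nonnegative integers n and k, the k-th derivative of the Chebyshev polynomial T_n at the endpoints ±1 satisfies T_n^{(k)}(±1) = (±1)^{n+k} · ∏_{j=0}^{k-1} (n² − j²)/(2j+1). -/
open Polynomial

lemma cheb_ode (n : ℤ) :
    (n : ℝ[X])^2 * Chebyshev.T ℝ n =
      X * derivative (Chebyshev.T ℝ n) - (1 - X^2) * derivative (derivative (Chebyshev.T ℝ n)) := by
  have h := Chebyshev.add_one_mul_T_eq_poly_in_U (R := ℝ) (n - 1)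
  simp only [sub_add_cancel] at h
  have hd : derivative (Chebyshev.T ℝ n) = (n : ℝ[X]) * Chebyshev.U ℝ (n - 1) :=
    Chebyshev.T_derivative_eq_U n
  have hd2 : derivative (derivative (Chebyshev.T ℝ n)) =
      (n : ℝ[X]) * derivative (Chebyshev.U ℝ (n - 1)) := by
    rw [hd]; simp [derivative_mul]
  have hc : ((n - 1 : ℤ) : ℝ[X]) + 1 = (n : ℝ[X]) := by push_cast; ring
  rw [hc] at h
  linear_combination (n : ℝ[X]) * h - X * hd + (1 - X^2) * hd2

lemma cheb_leib (n : ℤ) (k : ℕ) :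
    (1 - X^2) * derivative^[k+2] (Chebyshev.T ℝ n) =
      (2*(k:ℝ[X])+1) * X * derivative^[k+1] (Chebyshev.T ℝ n)
        + ((k:ℝ[X])^2 - (n:ℝ[X])^2) * derivative^[k] (Chebyshev.T ℝ n) := by
  induction k with
  | zero =>
      simp only [Nat.cast_zero, Function.iterate_succ_apply', Function.iterate_zero, id_eq,
        Function.iterate_one]
      linear_combination cheb_ode n
  | succ k ih =>
      have h := congrArg derivative ih
      simp only [derivative_mul, derivative_sub, derivative_add, derivative_one,
        derivative_X_pow, derivative_X, derivative_natCast, derivative_intCast,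
        derivative_ofNat, derivative_pow, Function.iterate_succ_apply', Nat.cast_succ] at h ⊢
      norm_num [map_ofNat] at h ⊢
      linear_combination h

lemma cheb_step (n : ℤ) (k : ℕ) (x : ℝ) (hx : x^2 = 1) :
    (2*(k:ℝ)+1) * ((derivative^[k+1] (Chebyshev.T ℝ n)).eval x)
      = x * ((n:ℝ)^2 - (k:ℝ)^2) * ((derivative^[k] (Chebyshev.T ℝ n)).eval x) := by
  have h := congrArg (eval x) (cheb_leib n k)
  simp only [eval_mul, eval_sub, eval_add, eval_pow, eval_one, eval_X, eval_natCast,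
    eval_intCast, eval_ofNat, hx, sub_self, zero_mul] at h
  linear_combination (-x) * h - (2*(k:ℝ)+1) * ((derivative^[k+1] (Chebyshev.T ℝ n)).eval x) * hx

lemma T_eval_one (m : ℕ) : (Chebyshev.T ℝ m).eval 1 = 1 := by
  induction m using Nat.twoStepInduction with
  | zero => simp [Chebyshev.T_zero]
  | one => simp [Chebyshev.T_one]
  | more m ih1 ih2 =>
      have : ((m + 2 : ℕ) : ℤ) = (m : ℤ) + 2 := by push_cast; ring
      rw [this, Chebyshev.T_add_two]
      have h1 : ((m + 1 : ℕ) : ℤ) = (m : ℤ) + 1 := by push_cast; ring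
      rw [h1] at ih2
      simp [ih1, ih2]
      norm_num

lemma T_eval_neg_one (m : ℕ) : (Chebyshev.T ℝ m).eval (-1) = (-1)^m := by
  induction m using Nat.twoStepInduction with
  | zero => simp [Chebyshev.T_zero]
  | one => simp [Chebyshev.T_one]
  | more m ih1 ih2 =>
      have : ((m + 2 : ℕ) : ℤ) = (m : ℤ) + 2 := by push_cast; ring
      rw [this, Chebyshev.T_add_two]
      have h1 : ((m + 1 : ℕ) : ℤ) = (m : ℤ) + 1 := by push_cast; ring
      rw [h1] at ih2
      simp only [eval_sub, eval_mul, eval_ofNat, eval_X, ih1, ih2, pow_succ, pow_add]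
      ring


/-- Derivatives of Chebyshev polynomials at the endpoints:
`T_n^{(k)}(±1) = (±1)^{n+k} ∏_{j=0}^{k-1} (n² − j²)/(2j+1)`. -/
theorem chebyshev_deriv_at_endpoints (n k : ℕ) :
    ((Polynomial.derivative^[k] (Chebyshev.T ℝ n)).eval (1 : ℝ) =
        ∏ j ∈ Finset.range k, ((n : ℝ) ^ 2 - (j : ℝ) ^ 2) / (2 * (j : ℝ) + 1)) ∧
    ((Polynomial.derivative^[k] (Chebyshev.T ℝ n)).eval (-1 : ℝ) =
        (-1 : ℝ) ^ (n + k) *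
          ∏ j ∈ Finset.range k, ((n : ℝ) ^ 2 - (j : ℝ) ^ 2) / (2 * (j : ℝ) + 1)) := by
  induction k with
  | zero =>
      constructor
      · simpa using T_eval_one n
      · simpa using T_eval_neg_one n
  | succ k ih =>
      obtain ⟨ih1, ih2⟩ := ih
      have hpos : (2*(k:ℝ)+1) ≠ 0 := by positivity
      have h1 := cheb_step n k 1 (by norm_num)
      have h2 := cheb_step n k (-1) (by norm_num)
      rw [ih1] at h1; rw [ih2] at h2
      push_cast at h1 h2
      constructor
      · have hE : (derivative^[k+1] (Chebyshev.T ℝ n)).eval (1:ℝ) =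
            (((n:ℝ)^2 - (k:ℝ)^2) * ∏ j ∈ Finset.range k,
              ((n : ℝ) ^ 2 - (j : ℝ) ^ 2) / (2 * (j : ℝ) + 1)) / (2*(k:ℝ)+1) := by
          rw [eq_div_iff hpos]
          linear_combination h1
        rw [Finset.prod_range_succ, hE]
        ring
      · have hE : (derivative^[k+1] (Chebyshev.T ℝ n)).eval (-1:ℝ) =
            (-((n:ℝ)^2 - (k:ℝ)^2) * ((-1:ℝ)^(n+k) * ∏ j ∈ Finset.range k,
              ((n : ℝ) ^ 2 - (j : ℝ) ^ 2) / (2 * (j : ℝ) + 1))) / (2*(k:ℝ)+1) := by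
          rw [eq_div_iff hpos]
          linear_combination h2
        rw [Finset.prod_range_succ, hE, pow_succ]
        ring
end

section
/- Let f be a function on [-1,1] whose Chebyshev coefficients satisfy |a_j| ≤ 2M ρ^{-j} for all j ≥ 0, for some ρ > 1 and M > 0. If an n-point quadrature rule with nonnegative weights w_k summing to K is exact for all polynomials of degree ≤ 2n−1 against a nonnegative weight function w with ∫_{-1}^1 w = K, and f(x) = ∑_{j=0}^∞ a_j T_j(x) converges uniformly, then the quadrature error satisfies |∫_{-1}^1 f(x)w(x)dx − ∑_k w_k f(x_k)| ≤ 4 K M / (ρ^{2n} (1 − ρ^{-1})). -/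
open Polynomial intervalIntegral Filter

lemma chebT_natDegree_le (j : ℕ) : (Polynomial.Chebyshev.T ℝ (j : ℤ)).natDegree ≤ j := by
  induction j using Nat.strong_induction_on with
  | _ j ih =>
    match j with
    | 0 => simp [Polynomial.Chebyshev.T_zero]
    | 1 =>
      rw [show ((1:ℕ):ℤ) = 1 by norm_num, Polynomial.Chebyshev.T_one]
      exact Polynomial.natDegree_X_le
    | (j+2) =>
      rw [show ((j+2:ℕ):ℤ) = (j:ℤ) + 2 by push_cast; ring, Polynomial.Chebyshev.T_add_two]
      refine le_trans (Polynomial.natDegree_sub_le _ _) (max_le ?_ ?_)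
      · refine le_trans (Polynomial.natDegree_mul_le) ?_
        have h1 : (2 * Polynomial.X : ℝ[X]).natDegree ≤ 1 := by
          refine le_trans (Polynomial.natDegree_mul_le) ?_
          simp
        have h2 : (Polynomial.Chebyshev.T ℝ ((j:ℤ)+1)).natDegree ≤ j + 1 := by
          have := ih (j+1) (by omega)
          rwa [show ((j+1:ℕ):ℤ) = (j:ℤ)+1 by push_cast; ring] at this
        omega
      · have := ih j (by omega)
        omega

lemma chebT_abs_le (j : ℕ) {t : ℝ} (ht : t ∈ Set.Icc (-1:ℝ) 1) :
    |(Polynomial.Chebyshev.T ℝ (j : ℤ)).eval t| ≤ 1 := by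
  have h := Polynomial.Chebyshev.T_real_cos (Real.arccos t) (j : ℤ)
  rw [Real.cos_arccos ht.1 ht.2] at h
  rw [h]
  exact Real.abs_cos_le_one _

theorem gauss_quadrature_error_analytic (n : ℕ) (hn : 1 ≤ n)
    (f : ℝ → ℝ) (a : ℕ → ℝ) (M ρ : ℝ) (hρ : 1 < ρ) (hM : 0 < M)
    (hcoef : ∀ j : ℕ, |a j| ≤ 2 * M * ρ ^ (-(j : ℤ)))
    (hunif : TendstoUniformlyOn
      (fun N x => ∑ j ∈ Finset.range N, a j * (Chebyshev.T ℝ j).eval x) f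
      atTop (Set.Icc (-1 : ℝ) 1))
    (w : ℝ → ℝ) (hw : IntervalIntegrable w MeasureTheory.volume (-1) 1)
    (hwnonneg : ∀ x ∈ Set.Icc (-1 : ℝ) 1, 0 ≤ w x)
    (K : ℝ) (hK : K = ∫ x in (-1 : ℝ)..1, w x)
    (x : Fin n → ℝ) (hx : ∀ k, x k ∈ Set.Icc (-1 : ℝ) 1)
    (W : Fin n → ℝ) (hWnonneg : ∀ k, 0 ≤ W k) (hWsum : ∑ k, W k = K)
    (hexact : ∀ p : Polynomial ℝ, p.natDegree ≤ 2 * n - 1 →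
      ∑ k, W k * p.eval (x k) = ∫ t in (-1 : ℝ)..1, p.eval t * w t) :
    |(∫ t in (-1 : ℝ)..1, f t * w t) - ∑ k, W k * f (x k)| ≤
      4 * K * M / (ρ ^ (2 * n) * (1 - ρ⁻¹)) := by
  have hρ0 : (0:ℝ) < ρ := lt_trans one_pos hρ
  set r : ℝ := ρ⁻¹ with hr
  have hr0 : 0 < r := inv_pos.mpr hρ0
  have hr1 : r < 1 := inv_lt_one_of_one_lt₀ hρ
  have h1r : 0 < 1 - r := by linarith
  have hIcc : Set.uIcc (-1:ℝ) 1 = Set.Icc (-1:ℝ) 1 := Set.uIcc_of_le (by norm_num)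
  have hKnn : 0 ≤ K := hWsum ▸ Finset.sum_nonneg fun k _ => hWnonneg k
  have hint : ∀ p : ℝ[X], IntervalIntegrable (fun t => p.eval t * w t)
      MeasureTheory.volume (-1) 1 := fun p =>
    hw.continuousOn_mul (p.continuous.continuousOn)
  set S : ℕ → ℝ → ℝ := fun N t => ∑ j ∈ Finset.range N, a j * (Chebyshev.T ℝ j).eval t with hS
  have hScont : ∀ N, Continuous (S N) := fun N =>
    continuous_finset_sum _ fun j _ => continuous_const.mul (Chebyshev.T ℝ j).continuous
  have hfc : ContinuousOn f (Set.Icc (-1:ℝ) 1) :=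
    hunif.continuousOn (Frequently.of_forall fun N => (hScont N).continuousOn)
  have hfw : IntervalIntegrable (fun t => f t * w t) MeasureTheory.volume (-1) 1 :=
    hw.continuousOn_mul (hIcc ▸ hfc)
  have hSw : ∀ N, IntervalIntegrable (fun t => S N t * w t) MeasureTheory.volume (-1) 1 :=
    fun N => hw.continuousOn_mul (hScont N).continuousOn
  set E : ℕ → ℝ := fun j => (∫ t in (-1:ℝ)..1, (Chebyshev.T ℝ j).eval t * w t)
      - ∑ k, W k * (Chebyshev.T ℝ j).eval (x k) with hE
  have hEzero : ∀ j < 2 * n, E j = 0 := by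
    intro j hj
    have := hexact (Chebyshev.T ℝ j) (le_trans (chebT_natDegree_le j) (by omega))
    simp only [hE]
    rw [← this]
    ring
  have hEbound : ∀ j, |E j| ≤ 2 * K := by
    intro j
    have h1 : |∫ t in (-1:ℝ)..1, (Chebyshev.T ℝ j).eval t * w t| ≤ K := by
      rw [abs_le]
      constructor
      · have hmono := intervalIntegral.integral_mono_on (by norm_num : (-1:ℝ) ≤ 1)
          hw.neg (hint (Chebyshev.T ℝ j)) (fun t ht => by
            have h := abs_le.mp (chebT_abs_le j ht)
            have hwt := hwnonneg t ht
            simp only [Pi.neg_apply]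
            nlinarith)
        simp only [Pi.neg_apply] at hmono
        rw [intervalIntegral.integral_neg, ← hK] at hmono
        exact hmono
      · have hmono := intervalIntegral.integral_mono_on (by norm_num : (-1:ℝ) ≤ 1)
          (hint (Chebyshev.T ℝ j)) hw (fun t ht => by
            have h := abs_le.mp (chebT_abs_le j ht)
            have hwt := hwnonneg t ht
            nlinarith)
        rwa [← hK] at hmono
    have h2 : |∑ k, W k * (Chebyshev.T ℝ j).eval (x k)| ≤ K := by
      refine le_trans (Finset.abs_sum_le_sum_abs _ _) ?_
      rw [← hWsum]
      refine Finset.sum_le_sum fun k _ => ?_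
      rw [abs_mul, abs_of_nonneg (hWnonneg k)]
      calc W k * |(Chebyshev.T ℝ j).eval (x k)| ≤ W k * 1 :=
            mul_le_mul_of_nonneg_left (chebT_abs_le j (hx k)) (hWnonneg k)
        _ = W k := mul_one _
    calc |E j| ≤ |∫ t in (-1:ℝ)..1, (Chebyshev.T ℝ j).eval t * w t|
          + |∑ k, W k * (Chebyshev.T ℝ j).eval (x k)| := abs_sub _ _
      _ ≤ K + K := add_le_add h1 h2
      _ = 2 * K := by ring
  have hES : ∀ N, (∫ t in (-1:ℝ)..1, S N t * w t) - ∑ k, W k * S N (x k)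
      = ∑ j ∈ Finset.range N, a j * E j := by
    intro N
    have hi : (∫ t in (-1:ℝ)..1, S N t * w t)
        = ∑ j ∈ Finset.range N, a j * ∫ t in (-1:ℝ)..1, (Chebyshev.T ℝ j).eval t * w t := by
      have heq : (fun t => S N t * w t)
          = fun t => ∑ j ∈ Finset.range N, a j * ((Chebyshev.T ℝ j).eval t * w t) := by
        funext t
        simp only [hS, Finset.sum_mul, mul_assoc]
      rw [heq, intervalIntegral.integral_finset_sum (μ := MeasureTheory.volume)
        (f := fun (j : ℕ) (t : ℝ) => a j * ((Chebyshev.T ℝ j).eval t * w t))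
        (fun j _ => (hint (Chebyshev.T ℝ j)).const_mul (a j))]
      exact Finset.sum_congr rfl fun j _ => intervalIntegral.integral_const_mul _ _
    have hq : (∑ k, W k * S N (x k))
        = ∑ j ∈ Finset.range N, a j * ∑ k, W k * (Chebyshev.T ℝ j).eval (x k) := by
      simp only [hS, Finset.mul_sum]
      rw [Finset.sum_comm]
      exact Finset.sum_congr rfl fun j _ => Finset.sum_congr rfl fun k _ => by ring
    rw [hi, hq, ← Finset.sum_sub_distrib]
    exact Finset.sum_congr rfl fun j _ => by simp only [hE]; ring
  set B : ℝ := 4 * K * M / (ρ ^ (2 * n) * (1 - ρ⁻¹)) with hB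
  have hBeq : B = 4 * K * M * (r ^ (2 * n) / (1 - r)) := by
    rw [hB, hr, div_eq_mul_inv, mul_inv, ← inv_pow, div_eq_mul_inv]
  have hbound : ∀ N, 2 * n ≤ N → |∑ j ∈ Finset.range N, a j * E j| ≤ B := by
    intro N hN
    have hsplit : Finset.range N = Finset.range (2*n) ∪ Finset.Ico (2*n) N := by
      rw [Finset.range_eq_Ico, Finset.range_eq_Ico]
      exact (Finset.Ico_union_Ico_eq_Ico (Nat.zero_le _) hN).symm
    rw [hsplit, Finset.sum_union (by
      rw [Finset.range_eq_Ico]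
      exact Finset.Ico_disjoint_Ico_consecutive 0 (2*n) N)]
    have hzero : ∑ j ∈ Finset.range (2*n), a j * E j = 0 :=
      Finset.sum_eq_zero fun j hj => by
        rw [hEzero j (Finset.mem_range.mp hj), mul_zero]
    rw [hzero, zero_add]
    calc |∑ j ∈ Finset.Ico (2*n) N, a j * E j|
        ≤ ∑ j ∈ Finset.Ico (2*n) N, |a j * E j| := Finset.abs_sum_le_sum_abs _ _
      _ ≤ ∑ j ∈ Finset.Ico (2*n) N, (2 * M * r ^ j) * (2 * K) := by
          refine Finset.sum_le_sum fun j _ => ?_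
          rw [abs_mul]
          have h1 : |a j| ≤ 2 * M * r ^ j := by
            have := hcoef j
            rwa [zpow_neg, zpow_natCast, ← inv_pow] at this
          exact mul_le_mul h1 (hEbound j) (abs_nonneg _) (by positivity)
      _ = 4 * K * M * ∑ j ∈ Finset.Ico (2*n) N, r ^ j := by
          rw [Finset.mul_sum]
          exact Finset.sum_congr rfl fun j _ => by ring
      _ ≤ 4 * K * M * (r ^ (2*n) / (1 - r)) := by
          refine mul_le_mul_of_nonneg_left ?_ (by positivity)
          have hgeom : ∑ j ∈ Finset.Ico (2*n) N, r ^ j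
              = (r ^ (2*n) - r ^ N) / (1 - r) := by
            exact geom_sum_Ico' (ne_of_lt hr1) hN
          rw [hgeom]
          have hle : r^(2*n) - r^N ≤ r^(2*n) := sub_le_self _ (by positivity)
          gcongr
      _ = B := hBeq.symm
  have hIten : Tendsto (fun N => ∫ t in (-1:ℝ)..1, S N t * w t) atTop
      (nhds (∫ t in (-1:ℝ)..1, f t * w t)) := by
    rw [Metric.tendsto_atTop]
    intro ε hε
    have hε' : 0 < ε / (2 * (K + 1)) := by positivity
    obtain ⟨N₀, hN₀⟩ := eventually_atTop.mp
      (Metric.tendstoUniformlyOn_iff.mp hunif _ hε')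
    refine ⟨N₀, fun N hN => ?_⟩
    set c : ℝ := ε / (2 * (K + 1)) with hc
    have hd : ∀ t ∈ Set.Icc (-1:ℝ) 1, |S N t - f t| ≤ c := by
      intro t ht
      have h := hN₀ N hN t ht
      rw [Real.dist_eq, abs_sub_comm] at h
      exact le_of_lt h
    have hintg : IntervalIntegrable (fun t => (S N t - f t) * w t)
        MeasureTheory.volume (-1) 1 :=
      hw.continuousOn_mul (((hScont N).continuousOn.sub (hIcc ▸ hfc)))
    have hsub : (∫ t in (-1:ℝ)..1, S N t * w t) - (∫ t in (-1:ℝ)..1, f t * w t)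
        = ∫ t in (-1:ℝ)..1, (S N t - f t) * w t := by
      rw [← intervalIntegral.integral_sub (hSw N) hfw]
      congr 1
      funext t
      ring
    have hub : (∫ t in (-1:ℝ)..1, (S N t - f t) * w t) ≤ c * K := by
      have := intervalIntegral.integral_mono_on (by norm_num : (-1:ℝ) ≤ 1)
        hintg (hw.const_mul c) (fun t ht => by
          have h := abs_le.mp (hd t ht)
          have hwt := hwnonneg t ht
          nlinarith)
      rwa [intervalIntegral.integral_const_mul, ← hK] at this
    have hlb : -(c * K) ≤ ∫ t in (-1:ℝ)..1, (S N t - f t) * w t := by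
      have := intervalIntegral.integral_mono_on (by norm_num : (-1:ℝ) ≤ 1)
        ((hw.const_mul c).neg) hintg (fun t ht => by
          have h := abs_le.mp (hd t ht)
          have hwt := hwnonneg t ht
          simp only [Pi.neg_apply]
          nlinarith)
      simp only [Pi.neg_apply] at this
      rw [intervalIntegral.integral_neg, intervalIntegral.integral_const_mul, ← hK] at this
      exact this
    rw [Real.dist_eq, hsub]
    have hcK : c * K < ε := by
      have h1 : c * K ≤ c * (K + 1) := by nlinarith
      have h2 : c * (K + 1) = ε / 2 := by
        rw [hc]
        field_simp
      linarith
    rw [abs_lt]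
    constructor <;> [linarith; linarith]
  have hQten : Tendsto (fun N => ∑ k, W k * S N (x k)) atTop
      (nhds (∑ k, W k * f (x k))) :=
    tendsto_finset_sum _ fun k _ => (hunif.tendsto_at (hx k)).const_mul (W k)
  have hEten : Tendsto
      (fun N => |(∫ t in (-1:ℝ)..1, S N t * w t) - ∑ k, W k * S N (x k)|) atTop
      (nhds |(∫ t in (-1:ℝ)..1, f t * w t) - ∑ k, W k * f (x k)|) :=
    (hIten.sub hQten).abs
  refine le_of_tendsto hEten ?_
  filter_upwards [eventually_ge_atTop (2*n)] with N hN
  rw [hES N]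
  exact hbound N hN
end

section
/- Let f be a function on [-1,1] whose Chebyshev coefficients satisfy |a_j| ≤ 2V/(π j(j−1)⋯(j−m)) for all j > m, for some V > 0 and integer m ≥ 1. If an n-point quadrature rule with weights summing to K is exact for polynomials of degree ≤ 2n−1 against a nonnegative weight with total mass K, and 2n > m+1, and the Chebyshev series of f converges uniformly, then the quadrature error is at most 4KV/(π m (2n−1)(2n−2)⋯(2n−m)). -/
open Polynomial intervalIntegral Filter

lemma prod_pos_aux (m j : ℕ) (hj : m < j) :
    0 < ∏ i ∈ Finset.range (m+1), ((j:ℝ) - i) := by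
  apply Finset.prod_pos
  intro i hi
  simp only [Finset.mem_range] at hi
  have : (i:ℝ) < j := by exact_mod_cast by omega
  linarith

lemma Q_pos_aux (m j : ℕ) (hj : m < j) :
    0 < ∏ i ∈ Finset.range m, ((j:ℝ) - 1 - i) := by
  apply Finset.prod_pos
  intro i hi
  simp only [Finset.mem_range] at hi
  have h1 : (i:ℝ) + 1 ≤ m := by exact_mod_cast Nat.succ_le_of_lt hi
  have h2 : (m:ℝ) < j := by exact_mod_cast hj
  linarith

lemma tele (m : ℕ) (hm : 1 ≤ m) (j : ℕ) (hj : m < j) :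
    (1:ℝ) / (∏ i ∈ Finset.range (m+1), ((j:ℝ) - i)) =
      1/((m:ℝ) * ∏ i ∈ Finset.range m, ((j:ℝ) - 1 - i)) -
      1/((m:ℝ) * ∏ i ∈ Finset.range m, (((j+1:ℕ):ℝ) - 1 - i)) := by
  have hmj : (m:ℝ) < j := by exact_mod_cast hj
  set Qj := ∏ i ∈ Finset.range m, ((j:ℝ) - 1 - i) with hQj
  have hcast : ∀ i : ℕ, (((j+1:ℕ)):ℝ) - 1 - i = (j:ℝ) - i := by intro i; push_cast; ring
  rw [Finset.prod_congr rfl (fun i _ => hcast i)]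
  set Qjp := ∏ i ∈ Finset.range m, ((j:ℝ) - i) with hQjp
  set Pj := ∏ i ∈ Finset.range (m+1), ((j:ℝ) - i) with hPj
  have e2 : Pj = Qjp * ((j:ℝ) - m) := by rw [hPj, Finset.prod_range_succ]
  have e1' : Pj = Qj * (j:ℝ) := by
    rw [hPj, Finset.prod_range_succ', hQj]
    push_cast
    rw [sub_zero]
    congr 1
    exact Finset.prod_congr rfl fun i _ => by ring
  have hQjpos : 0 < Qj := Q_pos_aux m j hj
  have hPpos : 0 < Pj := prod_pos_aux m j hj
  have hQjppos : 0 < Qjp := by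
    apply Finset.prod_pos
    intro i hi
    simp only [Finset.mem_range] at hi
    have : (i:ℝ) < j := by exact_mod_cast by omega
    linarith
  have hm0 : (0:ℝ) < m := by exact_mod_cast hm
  have hj0 : (0:ℝ) < j := by exact_mod_cast (by omega : 0 < j)
  have hjm : (0:ℝ) < (j:ℝ) - m := by linarith
  have hq1 : Qj = Pj / j := by rw [e1']; field_simp
  have hq2 : Qjp = Pj / ((j:ℝ) - m) := by rw [e2]; field_simp
  rw [hq1, hq2]
  have hP0 : Pj ≠ 0 := ne_of_gt hPpos
  field_simp
  ring

lemma tail_eq (m : ℕ) (hm : 1 ≤ m) (J : ℕ) (hJ : m < J) (N : ℕ) :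
    ∑ j ∈ Finset.Ico J (J+N), (1:ℝ)/(∏ i ∈ Finset.range (m+1), ((j:ℝ)-i)) =
      1/((m:ℝ) * ∏ i ∈ Finset.range m, ((J:ℝ)-1-i)) -
      1/((m:ℝ) * ∏ i ∈ Finset.range m, (((J+N:ℕ):ℝ)-1-i)) := by
  induction N with
  | zero => simp
  | succ N ih =>
    have h1 : J + (N+1) = (J+N) + 1 := by omega
    rw [h1, Finset.sum_Ico_succ_top (by omega), ih, tele m hm (J+N) (by omega)]
    ring

lemma tail_le (m : ℕ) (hm : 1 ≤ m) (J : ℕ) (hJ : m < J) (M : ℕ) :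
    ∑ j ∈ Finset.Ico J M, (1:ℝ)/(∏ i ∈ Finset.range (m+1), ((j:ℝ)-i)) ≤
      1/((m:ℝ) * ∏ i ∈ Finset.range m, ((J:ℝ)-1-i)) := by
  have hQJ : 0 < (m:ℝ) * ∏ i ∈ Finset.range m, ((J:ℝ)-1-i) := by
    have := Q_pos_aux m J hJ
    have hm0 : (0:ℝ) < m := by exact_mod_cast hm
    positivity
  rcases le_or_gt M J with h | h
  · rw [Finset.Ico_eq_empty (by omega)]
    simp only [Finset.sum_empty]
    positivity
  · have hM : M = J + (M - J) := by omega
    rw [hM, tail_eq m hm J hJ (M - J)]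
    have hQ2 : 0 < (m:ℝ) * ∏ i ∈ Finset.range m, (((J + (M-J):ℕ):ℝ)-1-i) := by
      have := Q_pos_aux m (J + (M-J)) (by omega)
      have hm0 : (0:ℝ) < m := by exact_mod_cast hm
      positivity
    have : 0 ≤ 1/((m:ℝ) * ∏ i ∈ Finset.range m, (((J + (M-J):ℕ):ℝ)-1-i)) := by positivity
    linarith

lemma T_natDegree_le (j : ℕ) : (Chebyshev.T ℝ j).natDegree ≤ j := by
  induction j using Nat.strong_induction_on with
  | _ j ih =>
    match j with
    | 0 => simp
    | 1 => simp [Polynomial.natDegree_X_le]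
    | (j+2) =>
      have : ((j+2 : ℕ) : ℤ) = (j : ℤ) + 2 := by push_cast; ring
      rw [this, Chebyshev.T_add_two]
      refine le_trans (natDegree_sub_le _ _) ?_
      have h1 : (2 * X * Chebyshev.T ℝ ((j:ℤ)+1)).natDegree ≤ j + 2 := by
        refine le_trans (natDegree_mul_le) ?_
        have := ih (j+1) (by omega)
        have hc : ((j+1 : ℕ) : ℤ) = (j : ℤ) + 1 := by push_cast; ring
        rw [hc] at this
        have h2 : (2 * X : ℝ[X]).natDegree ≤ 1 := by
          refine le_trans natDegree_mul_le ?_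
          simp [natDegree_X_le]
        omega
      have h2 := ih j (by omega)
      omega

lemma T_abs_le (j : ℕ) (t : ℝ) (ht : t ∈ Set.Icc (-1:ℝ) 1) :
    |(Chebyshev.T ℝ j).eval t| ≤ 1 := by
  have : t = Real.cos (Real.arccos t) := (Real.cos_arccos ht.1 ht.2).symm
  rw [this, Chebyshev.T_real_cos]
  exact Real.abs_cos_le_one _

theorem gauss_quadrature_error_differentiable (n m : ℕ) (hm : 1 ≤ m) (hn : m + 1 < 2 * n)
    (f : ℝ → ℝ) (a : ℕ → ℝ) (V : ℝ) (hV : 0 < V)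
    (hcoef : ∀ j : ℕ, m < j →
      |a j| ≤ 2 * V / (Real.pi * ∏ i ∈ Finset.range (m + 1), ((j : ℝ) - (i : ℝ))))
    (hunif : TendstoUniformlyOn
      (fun N x => ∑ j ∈ Finset.range N, a j * (Chebyshev.T ℝ j).eval x) f
      atTop (Set.Icc (-1 : ℝ) 1))
    (w : ℝ → ℝ) (hw : IntervalIntegrable w MeasureTheory.volume (-1) 1)
    (hwnonneg : ∀ x ∈ Set.Icc (-1 : ℝ) 1, 0 ≤ w x)
    (K : ℝ) (hK : K = ∫ x in (-1 : ℝ)..1, w x)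
    (x : Fin n → ℝ) (hx : ∀ k, x k ∈ Set.Icc (-1 : ℝ) 1)
    (W : Fin n → ℝ) (hWnonneg : ∀ k, 0 ≤ W k) (hWsum : ∑ k, W k = K)
    (hexact : ∀ p : Polynomial ℝ, p.natDegree ≤ 2 * n - 1 →
      ∑ k, W k * p.eval (x k) = ∫ t in (-1 : ℝ)..1, p.eval t * w t) :
    |(∫ t in (-1 : ℝ)..1, f t * w t) - ∑ k, W k * f (x k)| ≤
      4 * K * V / (Real.pi * m * ∏ i ∈ Finset.range m, ((2 * n : ℝ) - 1 - (i : ℝ))) := by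
  have hpi : (0:ℝ) < Real.pi := Real.pi_pos
  have hm0 : (0:ℝ) < m := by exact_mod_cast hm
  set S : ℕ → ℝ → ℝ := fun N t => ∑ j ∈ Finset.range N, a j * (Chebyshev.T ℝ j).eval t
    with hSdef
  have hScont : ∀ N, Continuous (S N) := fun N =>
    continuous_finset_sum _ fun j _ => continuous_const.mul (Chebyshev.T ℝ j).continuous
  have hfc : ContinuousOn f (Set.Icc (-1:ℝ) 1) :=
    hunif.continuousOn (Frequently.of_forall fun N => (hScont N).continuousOn)
  have huIcc : Set.uIcc (-1:ℝ) 1 = Set.Icc (-1:ℝ) 1 := Set.uIcc_of_le (by norm_num)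
  have hmul_int : ∀ g : ℝ → ℝ, ContinuousOn g (Set.Icc (-1:ℝ) 1) →
      IntervalIntegrable (fun t => g t * w t) MeasureTheory.volume (-1) 1 := by
    intro g hg
    apply hw.continuousOn_mul
    rwa [huIcc]
  have hfw : IntervalIntegrable (fun t => f t * w t) MeasureTheory.volume (-1) 1 :=
    hmul_int f hfc
  have hK0 : 0 ≤ K := by
    rw [← hWsum]; exact Finset.sum_nonneg fun k _ => hWnonneg k
  -- the error functional on T_j
  set c : ℕ → ℝ := fun j => (∫ t in (-1:ℝ)..1, (Chebyshev.T ℝ j).eval t * w t)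
      - ∑ k, W k * (Chebyshev.T ℝ j).eval (x k) with hcdef
  have hTw : ∀ j : ℕ, IntervalIntegrable (fun t => (Chebyshev.T ℝ j).eval t * w t)
      MeasureTheory.volume (-1) 1 := fun j => hmul_int _ (Chebyshev.T ℝ j).continuous.continuousOn
  have hcz : ∀ j, j < 2*n → c j = 0 := by
    intro j hj
    have := hexact (Chebyshev.T ℝ j) (le_trans (T_natDegree_le j) (by omega))
    rw [hcdef]
    simp only
    rw [← this, sub_self]
  have hcb : ∀ j : ℕ, |c j| ≤ 2 * K := by
    intro j
    have h1 : |∫ t in (-1:ℝ)..1, (Chebyshev.T ℝ j).eval t * w t| ≤ K := by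
      calc |∫ t in (-1:ℝ)..1, (Chebyshev.T ℝ j).eval t * w t|
          ≤ ∫ t in (-1:ℝ)..1, |(Chebyshev.T ℝ j).eval t * w t| :=
            intervalIntegral.abs_integral_le_integral_abs (by norm_num)
        _ ≤ ∫ t in (-1:ℝ)..1, w t := by
            apply intervalIntegral.integral_mono_on (by norm_num) (hTw j).abs hw
            intro t ht
            rw [abs_mul, abs_of_nonneg (hwnonneg t ht)]
            calc |(Chebyshev.T ℝ j).eval t| * w t ≤ 1 * w t :=
                  mul_le_mul_of_nonneg_right (T_abs_le j t ht) (hwnonneg t ht)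
              _ = w t := one_mul _
        _ = K := hK.symm
    have h2 : |∑ k, W k * (Chebyshev.T ℝ j).eval (x k)| ≤ K := by
      calc |∑ k, W k * (Chebyshev.T ℝ j).eval (x k)|
          ≤ ∑ k, |W k * (Chebyshev.T ℝ j).eval (x k)| := Finset.abs_sum_le_sum_abs _ _
        _ ≤ ∑ k, W k := by
            apply Finset.sum_le_sum
            intro k _
            rw [abs_mul, abs_of_nonneg (hWnonneg k)]
            calc W k * |(Chebyshev.T ℝ j).eval (x k)| ≤ W k * 1 :=
                  mul_le_mul_of_nonneg_left (T_abs_le j (x k) (hx k)) (hWnonneg k)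
              _ = W k := mul_one _
        _ = K := hWsum
    calc |c j| ≤ |∫ t in (-1:ℝ)..1, (Chebyshev.T ℝ j).eval t * w t|
        + |∑ k, W k * (Chebyshev.T ℝ j).eval (x k)| := abs_sub _ _
      _ ≤ 2 * K := by linarith
  -- error of partial sums
  have hSw : ∀ N, IntervalIntegrable (fun t => S N t * w t) MeasureTheory.volume (-1) 1 :=
    fun N => hmul_int _ (hScont N).continuousOn
  have hEN : ∀ N, (∫ t in (-1:ℝ)..1, S N t * w t) - ∑ k, W k * S N (x k)
      = ∑ j ∈ Finset.range N, a j * c j := by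
    intro N
    have hint : (∫ t in (-1:ℝ)..1, S N t * w t)
        = ∑ j ∈ Finset.range N, a j * ∫ t in (-1:ℝ)..1, (Chebyshev.T ℝ j).eval t * w t := by
      have heq : ∀ t : ℝ, S N t * w t
          = ∑ j ∈ Finset.range N, a j * ((Chebyshev.T ℝ j).eval t * w t) := by
        intro t
        rw [hSdef]
        simp only [Finset.sum_mul, mul_assoc]
      rw [intervalIntegral.integral_congr (fun t _ => heq t)]
      rw [intervalIntegral.integral_finset_sum]
      · exact Finset.sum_congr rfl fun j _ => intervalIntegral.integral_const_mul _ _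
      · intro j _
        exact (hTw j).const_mul (a j)
    have hsum : (∑ k, W k * S N (x k))
        = ∑ j ∈ Finset.range N, a j * ∑ k, W k * (Chebyshev.T ℝ j).eval (x k) := by
      simp only [hSdef, Finset.mul_sum]
      rw [Finset.sum_comm]
      refine Finset.sum_congr rfl fun j _ => ?_
      refine Finset.sum_congr rfl fun k _ => by ring
    rw [hint, hsum, ← Finset.sum_sub_distrib]
    exact Finset.sum_congr rfl fun j _ => by rw [hcdef]; ring
  -- the bound for each N
  set Q : ℝ := ∏ i ∈ Finset.range m, ((2 * n : ℝ) - 1 - (i : ℝ)) with hQdef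
  have hQcast : Q = ∏ i ∈ Finset.range m, (((2*n:ℕ):ℝ) - 1 - (i:ℝ)) := by
    rw [hQdef]
    exact Finset.prod_congr rfl fun i _ => by push_cast; ring
  have hQpos : 0 < Q := by
    rw [hQcast]; exact Q_pos_aux m (2*n) (by omega)
  have hbound : ∀ N, |∑ j ∈ Finset.range N, a j * c j|
      ≤ 4 * K * V / (Real.pi * m * Q) := by
    intro N
    have hsub : ∑ j ∈ Finset.range N, a j * c j = ∑ j ∈ Finset.Ico (2*n) N, a j * c j := by
      refine (Finset.sum_subset ?_ ?_).symm
      · intro j hj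
        simp only [Finset.mem_Ico] at hj
        simp only [Finset.mem_range]
        omega
      · intro j hj hj2
        simp only [Finset.mem_range] at hj
        simp only [Finset.mem_Ico] at hj2
        have : j < 2*n := by omega
        rw [hcz j this, mul_zero]
    rw [hsub]
    calc |∑ j ∈ Finset.Ico (2*n) N, a j * c j|
        ≤ ∑ j ∈ Finset.Ico (2*n) N, |a j * c j| := Finset.abs_sum_le_sum_abs _ _
      _ ≤ ∑ j ∈ Finset.Ico (2*n) N,
          (4 * K * V / Real.pi) * (1/(∏ i ∈ Finset.range (m+1), ((j:ℝ) - i))) := by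
          apply Finset.sum_le_sum
          intro j hj
          simp only [Finset.mem_Ico] at hj
          have hmj : m < j := by omega
          have hPj : 0 < ∏ i ∈ Finset.range (m+1), ((j:ℝ) - i) := prod_pos_aux m j hmj
          rw [abs_mul]
          calc |a j| * |c j|
              ≤ (2 * V / (Real.pi * ∏ i ∈ Finset.range (m+1), ((j:ℝ) - i))) * (2*K) := by
                apply mul_le_mul (hcoef j hmj) (hcb j) (abs_nonneg _)
                positivity
            _ = (4 * K * V / Real.pi) * (1/(∏ i ∈ Finset.range (m+1), ((j:ℝ) - i))) := by
                field_simp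
                ring
      _ = (4 * K * V / Real.pi) *
          ∑ j ∈ Finset.Ico (2*n) N, (1/(∏ i ∈ Finset.range (m+1), ((j:ℝ) - i))) := by
          rw [Finset.mul_sum]
      _ ≤ (4 * K * V / Real.pi) *
          (1/((m:ℝ) * ∏ i ∈ Finset.range m, (((2*n:ℕ):ℝ) - 1 - i))) := by
          apply mul_le_mul_of_nonneg_left (tail_le m hm (2*n) (by omega) N)
          positivity
      _ = 4 * K * V / (Real.pi * m * Q) := by
          rw [hQcast, div_mul_div_comm, mul_one]
          ring
  -- convergence
  have hlim : Tendsto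
      (fun N => (∫ t in (-1:ℝ)..1, S N t * w t) - ∑ k, W k * S N (x k)) atTop
      (nhds ((∫ t in (-1:ℝ)..1, f t * w t) - ∑ k, W k * f (x k))) := by
    rw [Metric.tendsto_atTop]
    intro ε hε
    have hδ : 0 < ε / (2*K+1) := by positivity
    rw [Metric.tendstoUniformlyOn_iff] at hunif
    obtain ⟨N₀, hN₀⟩ := Filter.eventually_atTop.mp (hunif (ε/(2*K+1)) hδ)
    refine ⟨N₀, fun N hN => ?_⟩
    have hdist : ∀ t ∈ Set.Icc (-1:ℝ) 1, |S N t - f t| ≤ ε/(2*K+1) := by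
      intro t ht
      have := hN₀ N hN t ht
      rw [Real.dist_eq] at this
      rw [abs_sub_comm]
      exact le_of_lt this
    have hA : |(∫ t in (-1:ℝ)..1, S N t * w t) - ∫ t in (-1:ℝ)..1, f t * w t|
        ≤ (ε/(2*K+1)) * K := by
      have hdiff : (∫ t in (-1:ℝ)..1, S N t * w t) - (∫ t in (-1:ℝ)..1, f t * w t)
          = ∫ t in (-1:ℝ)..1, (S N t - f t) * w t := by
        rw [← intervalIntegral.integral_sub (hSw N) hfw]
        exact intervalIntegral.integral_congr fun t _ => by ring
      rw [hdiff]
      have hint : IntervalIntegrable (fun t => (S N t - f t) * w t)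
          MeasureTheory.volume (-1) 1 :=
        hmul_int _ ((hScont N).continuousOn.sub hfc)
      calc |∫ t in (-1:ℝ)..1, (S N t - f t) * w t|
          ≤ ∫ t in (-1:ℝ)..1, |(S N t - f t) * w t| :=
            intervalIntegral.abs_integral_le_integral_abs (by norm_num)
        _ ≤ ∫ t in (-1:ℝ)..1, (ε/(2*K+1)) * w t := by
            apply intervalIntegral.integral_mono_on (by norm_num) hint.abs
              (hw.const_mul _)
            intro t ht
            rw [abs_mul, abs_of_nonneg (hwnonneg t ht)]
            exact mul_le_mul_of_nonneg_right (hdist t ht) (hwnonneg t ht)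
        _ = (ε/(2*K+1)) * K := by
            rw [intervalIntegral.integral_const_mul, ← hK]
    have hB : |(∑ k, W k * S N (x k)) - ∑ k, W k * f (x k)| ≤ (ε/(2*K+1)) * K := by
      have hdiff : (∑ k, W k * S N (x k)) - ∑ k, W k * f (x k)
          = ∑ k, W k * (S N (x k) - f (x k)) := by
        rw [← Finset.sum_sub_distrib]
        exact Finset.sum_congr rfl fun k _ => by ring
      rw [hdiff]
      calc |∑ k, W k * (S N (x k) - f (x k))|
          ≤ ∑ k, |W k * (S N (x k) - f (x k))| := Finset.abs_sum_le_sum_abs _ _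
        _ ≤ ∑ k : Fin n, W k * (ε/(2*K+1)) := by
            apply Finset.sum_le_sum
            intro k _
            rw [abs_mul, abs_of_nonneg (hWnonneg k)]
            exact mul_le_mul_of_nonneg_left (hdist (x k) (hx k)) (hWnonneg k)
        _ = (ε/(2*K+1)) * K := by rw [← Finset.sum_mul, hWsum]; ring
    rw [Real.dist_eq]
    have : |((∫ t in (-1:ℝ)..1, S N t * w t) - ∑ k, W k * S N (x k))
        - ((∫ t in (-1:ℝ)..1, f t * w t) - ∑ k, W k * f (x k))|
        ≤ |(∫ t in (-1:ℝ)..1, S N t * w t) - ∫ t in (-1:ℝ)..1, f t * w t|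
          + |(∑ k, W k * S N (x k)) - ∑ k, W k * f (x k)| := by
      have := abs_sub (((∫ t in (-1:ℝ)..1, S N t * w t) - ∫ t in (-1:ℝ)..1, f t * w t))
        ((∑ k, W k * S N (x k)) - ∑ k, W k * f (x k))
      calc |((∫ t in (-1:ℝ)..1, S N t * w t) - ∑ k, W k * S N (x k))
          - ((∫ t in (-1:ℝ)..1, f t * w t) - ∑ k, W k * f (x k))|
          = |(((∫ t in (-1:ℝ)..1, S N t * w t) - ∫ t in (-1:ℝ)..1, f t * w t))
            - ((∑ k, W k * S N (x k)) - ∑ k, W k * f (x k))| := by ring_nf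
        _ ≤ _ := abs_sub _ _
    have h2K : (0:ℝ) < 2*K+1 := by linarith
    have hfin : 2 * K * (ε/(2*K+1)) < ε := by
      calc 2 * K * (ε/(2*K+1)) = (2*K)/(2*K+1) * ε := by ring
        _ < 1 * ε := by
            apply mul_lt_mul_of_pos_right _ hε
            rw [div_lt_one h2K]
            linarith
        _ = ε := one_mul ε
    calc |((∫ t in (-1:ℝ)..1, S N t * w t) - ∑ k, W k * S N (x k))
        - ((∫ t in (-1:ℝ)..1, f t * w t) - ∑ k, W k * f (x k))|
        ≤ |(∫ t in (-1:ℝ)..1, S N t * w t) - ∫ t in (-1:ℝ)..1, f t * w t|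
          + |(∑ k, W k * S N (x k)) - ∑ k, W k * f (x k)| := this
      _ ≤ (ε/(2*K+1)) * K + (ε/(2*K+1)) * K := add_le_add hA hB
      _ = 2 * K * (ε/(2*K+1)) := by ring
      _ < ε := hfin
  -- conclude
  have habs : Tendsto
      (fun N => |(∫ t in (-1:ℝ)..1, S N t * w t) - ∑ k, W k * S N (x k)|) atTop
      (nhds |(∫ t in (-1:ℝ)..1, f t * w t) - ∑ k, W k * f (x k)|) := hlim.abs
  refine le_of_tendsto habs (Eventually.of_forall fun N => ?_)
  rw [hEN N]
  exact hbound N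
end

section
/- If f is analytic in an open set containing the Bernstein ellipse E_ρ (with foci ±1 and semiaxis sum ρ > 1) with |f(z)| ≤ M on E_ρ, then its Chebyshev coefficients a_j = (2/π)∫_{-1}^1 f(x)T_j(x)/√(1−x²) dx satisfy |a_j| ≤ 2M ρ^{-j} for all j ≥ 1 and |a_0| ≤ 2M. -/
open Polynomial intervalIntegral Complex Set MeasureTheory

theorem chebyshev_coeff_bound_analytic (f : ℂ → ℂ) (ρ M : ℝ) (hρ : 1 < ρ) (hM : 0 < M)
    (E : Set ℂ) (hE : E = {w : ℂ | ∃ z : ℂ, 1 ≤ ‖z‖ ∧ ‖z‖ ≤ ρ ∧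
      w = (z + z⁻¹) / 2})
    (U : Set ℂ) (hU : IsOpen U) (hEU : E ⊆ U)
    (hf : AnalyticOnNhd ℂ f U)
    (hbound : ∀ z ∈ E, ‖f z‖ ≤ M)
    (a : ℕ → ℂ)
    (ha : ∀ j, a j = (2 / Real.pi : ℂ) *
      ∫ x in (-1 : ℝ)..1, f x * ((Chebyshev.T ℂ j).eval (x : ℂ)) / Real.sqrt (1 - x ^ 2)) :
    (∀ j : ℕ, 1 ≤ j → ‖a j‖ ≤ 2 * M * ρ ^ (-(j : ℤ))) ∧
      ‖a 0‖ ≤ 2 * M := by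
  have hπ : (0:ℝ) < Real.pi := Real.pi_pos
  have hρ0 : (0:ℝ) < ρ := lt_trans one_pos hρ
  -- exp sum
  have hexpcos : ∀ z : ℂ, Complex.exp (z * Complex.I) + Complex.exp (-z * Complex.I)
      = 2 * Complex.cos z := by
    intro z
    rw [Complex.exp_mul_I, Complex.exp_mul_I, Complex.cos_neg, Complex.sin_neg]
    ring
  -- membership of real cosines in E
  have hmemE : ∀ t : ℝ, (↑(Real.cos t) : ℂ) ∈ E := by
    intro t
    rw [hE]
    refine ⟨Complex.exp (t * Complex.I), ?_, ?_, ?_⟩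
    · rw [Complex.norm_exp_ofReal_mul_I]
    · rw [Complex.norm_exp_ofReal_mul_I]; exact le_of_lt hρ
    · rw [← Complex.exp_neg]
      rw [show -((t:ℂ) * Complex.I) = -(t:ℂ) * Complex.I by ring, hexpcos,
        Complex.ofReal_cos]
      ring
  -- membership of annulus images in E
  have hmemE' : ∀ z : ℂ, 1 ≤ ‖z‖ → ‖z‖ ≤ ρ → (z + z⁻¹) / 2 ∈ E := by
    intro z h1 h2; rw [hE]; exact ⟨z, h1, h2, rfl⟩
  -- continuity of f ∘ real cos
  have hcont : Continuous fun t : ℝ => f ((Real.cos t : ℝ) : ℂ) := by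
    rw [continuous_iff_continuousAt]
    intro t
    have h2 : ContinuousAt (fun t : ℝ => ((Real.cos t : ℝ) : ℂ)) t := by fun_prop
    exact ContinuousAt.comp (g := f) ((hf _ (hEU (hmemE t))).continuousAt) h2
  suffices H : ∀ j : ℕ, ‖a j‖ ≤ 2 * M * ρ ^ (-(j : ℤ)) by
    refine ⟨fun j _ => H j, ?_⟩
    have := H 0
    simpa using this
  intro j
  set F : ℂ → ℂ := fun z => f ((z + z⁻¹) / 2) * z ^ (-(j:ℤ)-1) with hF
  set J : ℂ := ∫ θ in (0:ℝ)..Real.pi, f ((Real.cos θ : ℝ) : ℂ) * ((Real.cos (j * θ) : ℝ) : ℂ)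
    with hJ
  -- Step A : a j = (2/π) * J
  have stepA : a j = (2 / Real.pi : ℂ) * J := by
    rw [ha j, hJ]
    congr 1
    have himg : Real.cos '' Icc 0 Real.pi = Icc (-1) 1 :=
      Subset.antisymm (fun x ⟨t, _, ht⟩ => ht ▸ Real.cos_mem_Icc t) Real.surjOn_cos
    rw [intervalIntegral.integral_of_le (by norm_num : (-1:ℝ) ≤ 1),
      ← MeasureTheory.integral_Icc_eq_integral_Ioc, ← himg,
      MeasureTheory.integral_image_eq_integral_abs_deriv_smul measurableSet_Icc
        (fun x _ => (Real.hasDerivAt_cos x).hasDerivWithinAt) Real.injOn_cos,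
      intervalIntegral.integral_of_le (le_of_lt hπ),
      ← MeasureTheory.integral_Icc_eq_integral_Ioc,
      MeasureTheory.integral_Icc_eq_integral_Ioo,
      MeasureTheory.integral_Icc_eq_integral_Ioo]
    apply MeasureTheory.setIntegral_congr_fun measurableSet_Ioo
    intro θ hθ
    obtain ⟨h0, hπθ⟩ := hθ
    have hs : 0 < Real.sin θ := Real.sin_pos_of_pos_of_lt_pi h0 hπθ
    have hsqrt : Real.sqrt (1 - Real.cos θ ^ 2) = Real.sin θ := by
      rw [show 1 - Real.cos θ ^ 2 = Real.sin θ ^ 2 by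
        have := Real.sin_sq_add_cos_sq θ; linarith]
      exact Real.sqrt_sq hs.le
    have hT : Polynomial.eval ((Real.cos θ : ℝ) : ℂ) (Chebyshev.T ℂ (j:ℤ))
        = ((Real.cos (j * θ) : ℝ) : ℂ) := by
      rw [Complex.ofReal_cos, Polynomial.Chebyshev.T_complex_cos, Complex.ofReal_cos]
      push_cast
      ring_nf
    simp only [hT, hsqrt, abs_neg, abs_of_pos hs, Complex.real_smul]
    have hsne : ((Real.sin θ : ℝ) : ℂ) ≠ 0 := by
      exact_mod_cast ne_of_gt hs
    field_simp
  -- Step B : circle integral over unit circle equals 2 i J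
  have hh : ∀ θ : ℝ, deriv (circleMap 0 1) θ • F (circleMap 0 1 θ)
      = Complex.I * (f ((Real.cos θ : ℝ) : ℂ) * Complex.exp (-(j:ℂ) * θ * Complex.I)) := by
    intro θ
    have hz : circleMap 0 1 θ = Complex.exp (θ * Complex.I) := by simp [circleMap]
    rw [deriv_circleMap, hz, smul_eq_mul]
    simp only [hF]
    have hinv : (Complex.exp ((θ:ℂ) * Complex.I))⁻¹ = Complex.exp (-(θ:ℂ) * Complex.I) := by
      rw [← Complex.exp_neg]
      congr 1
      ring
    have hcos : (Complex.exp ((θ:ℂ) * Complex.I) + (Complex.exp ((θ:ℂ) * Complex.I))⁻¹) / 2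
        = ((Real.cos θ : ℝ) : ℂ) := by
      rw [hinv, hexpcos, Complex.ofReal_cos]
      ring
    have hpow : (Complex.exp ((θ:ℂ) * Complex.I)) ^ (-(j:ℤ) - 1)
        = Complex.exp ((-(j:ℂ) - 1) * ((θ:ℂ) * Complex.I)) := by
      rw [show ((-(j:ℂ) - 1) : ℂ) = ((-(j:ℤ) - 1 : ℤ) : ℂ) by push_cast; ring,
        Complex.exp_int_mul]
    rw [hcos, hpow]
    have hmul : Complex.exp ((θ:ℂ) * Complex.I) * Complex.exp ((-(j:ℂ) - 1) * ((θ:ℂ) * Complex.I))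
        = Complex.exp (-(j:ℂ) * θ * Complex.I) := by
      rw [← Complex.exp_add]
      congr 1
      ring
    calc Complex.exp ((θ:ℂ) * Complex.I) * Complex.I *
          (f ((Real.cos θ : ℝ) : ℂ) * Complex.exp ((-(j:ℂ) - 1) * ((θ:ℂ) * Complex.I)))
        = Complex.I * (f ((Real.cos θ : ℝ) : ℂ) *
            (Complex.exp ((θ:ℂ) * Complex.I) *
              Complex.exp ((-(j:ℂ) - 1) * ((θ:ℂ) * Complex.I)))) := by ring
      _ = _ := by rw [hmul]
  set h : ℝ → ℂ := fun θ => Complex.I * (f ((Real.cos θ : ℝ) : ℂ) *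
    Complex.exp (-(j:ℂ) * θ * Complex.I)) with hhdef
  have hhc : Continuous h := by
    apply continuous_const.mul
    apply hcont.mul
    apply Complex.continuous_exp.comp
    fun_prop
  have stepB : (∮ z in C(0, 1), F z) = 2 * Complex.I * J := by
    rw [circleIntegral]
    rw [intervalIntegral.integral_congr (g := h) (fun θ _ => hh θ)]
    have hsplit : (∫ θ in (0:ℝ)..(2*Real.pi), h θ)
        = (∫ θ in (0:ℝ)..Real.pi, h θ) + ∫ θ in Real.pi..(2*Real.pi), h θ :=
      (intervalIntegral.integral_add_adjacent_intervals
        (hhc.intervalIntegrable _ _) (hhc.intervalIntegrable _ _)).symm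
    have hrefl : (∫ θ in Real.pi..(2*Real.pi), h θ)
        = ∫ u in (0:ℝ)..Real.pi, h (2*Real.pi - u) := by
      have h1 : (∫ u in (0:ℝ)..Real.pi, h (2*Real.pi - u))
          = ∫ x in (2*Real.pi - Real.pi)..(2*Real.pi - 0), h x :=
        intervalIntegral.integral_comp_sub_left h (2*Real.pi)
      rw [h1]
      congr 1 <;> ring
    have key : ∀ u : ℝ, h u + h (2*Real.pi - u)
        = 2 * Complex.I * (f ((Real.cos u : ℝ) : ℂ) * ((Real.cos (j * u) : ℝ) : ℂ)) := by
      intro u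
      simp only [hhdef]
      rw [Real.cos_two_pi_sub]
      have hexp2 : Complex.exp (-(j:ℂ) * ((2*Real.pi - u : ℝ):ℂ) * Complex.I)
          = Complex.exp ((j:ℂ) * u * Complex.I) := by
        have he1 : Complex.exp ((((-(j:ℤ)) : ℤ) : ℂ) * (2*(Real.pi:ℂ)*Complex.I)) = 1 :=
          Complex.exp_int_mul_two_pi_mul_I _
        rw [show (-(j:ℂ) * ((2*Real.pi - u : ℝ):ℂ) * Complex.I)
            = (j:ℂ)*u*Complex.I + (((-(j:ℤ)) : ℤ) : ℂ) * (2*(Real.pi:ℂ)*Complex.I) by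
          push_cast; ring,
          Complex.exp_add, he1, mul_one]
      rw [hexp2]
      have hec : Complex.exp ((j:ℂ)*u*Complex.I) + Complex.exp (-(j:ℂ)*u*Complex.I)
          = 2 * ((Real.cos (j*u) : ℝ) : ℂ) := by
        have h3 := hexpcos ((j:ℂ)*u)
        rw [show (-((j:ℂ)*u))*Complex.I = -(j:ℂ)*u*Complex.I by ring] at h3
        rw [h3, show ((j:ℂ)*(u:ℂ)) = (((j*u:ℝ)):ℂ) by push_cast; ring,
          ← Complex.ofReal_cos]
      linear_combination (Complex.I * f ((Real.cos u : ℝ):ℂ)) * hec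
    rw [hsplit, hrefl,
      ← intervalIntegral.integral_add (f := h) (g := fun u => h (2*Real.pi - u))
        (hhc.intervalIntegrable _ _)
        (((hhc.comp (continuous_const.sub continuous_id) :
          Continuous fun u : ℝ => h (2*Real.pi - u))).intervalIntegrable _ _)]
    simp only [key]
    rw [intervalIntegral.integral_const_mul, hJ]
  -- Step C : Cauchy
  have hFd : ∀ z : ℂ, 1 ≤ ‖z‖ → ‖z‖ ≤ ρ → DifferentiableAt ℂ F z := by
    intro z h1 h2
    have hz0 : z ≠ 0 := by
      intro h
      rw [h] at h1
      simp at h1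
      linarith
    have hw : (z + z⁻¹)/2 ∈ U := hEU (hmemE' z h1 h2)
    have hf' : DifferentiableAt ℂ f ((z + z⁻¹)/2) := (hf _ hw).differentiableAt
    have hg : DifferentiableAt ℂ (fun w : ℂ => (w + w⁻¹)/2) z :=
      (differentiableAt_id.add (differentiableAt_inv hz0)).div_const 2
    exact (hf'.comp z hg).mul (differentiableAt_zpow.mpr (Or.inl hz0))
  have stepC : (∮ z in C(0, 1), F z) = ∮ z in C(0, ρ), F z := by
    refine (circleIntegral_eq_of_differentiable_on_annulus_off_countable one_pos hρ.le
      Set.countable_empty ?_ ?_).symm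
    · intro z hz
      obtain ⟨hz1, hz2⟩ := hz
      rw [Metric.mem_closedBall, dist_zero_right] at hz1
      rw [Metric.mem_ball, dist_zero_right, not_lt] at hz2
      exact (hFd z hz2 hz1).continuousAt.continuousWithinAt
    · intro z hz
      obtain ⟨⟨hz1, hz2⟩, -⟩ := hz
      rw [Metric.mem_ball, dist_zero_right] at hz1
      rw [Metric.mem_closedBall, dist_zero_right, not_le] at hz2
      exact hFd z hz2.le hz1.le
  -- Step D : bound
  have stepD : ‖∮ z in C(0, ρ), F z‖ ≤ 2 * Real.pi * ρ * (M * ρ ^ (-(j:ℤ)-1)) := by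
    apply circleIntegral.norm_integral_le_of_norm_le_const hρ0.le
    intro z hz
    rw [mem_sphere_zero_iff_norm] at hz
    have haz : ‖z‖ = ρ := hz
    have h1 : (1:ℝ) ≤ ‖z‖ := by rw [haz]; exact hρ.le
    have h2 : ‖z‖ ≤ ρ := le_of_eq haz
    rw [hF]
    simp only [norm_mul, norm_zpow, haz]
    have hfb : ‖f ((z + z⁻¹)/2)‖ ≤ M := hbound _ (hmemE' z h1 h2)
    exact mul_le_mul_of_nonneg_right hfb (by positivity)
  -- assemble
  have hJbound : ‖J‖ ≤ Real.pi * (M * ρ ^ (-(j:ℤ))) := by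
    have h2 : ‖2 * Complex.I * J‖ = 2 * ‖J‖ := by
      simp [norm_mul]
    rw [← stepC, stepB] at stepD
    rw [h2] at stepD
    have heq : ρ ^ (-(j:ℤ)-1) * ρ = ρ ^ (-(j:ℤ)) := by
      rw [zpow_sub_one₀ (ne_of_gt hρ0)]
      field_simp
    have heq2 : 2 * Real.pi * ρ * (M * ρ ^ (-(j:ℤ)-1))
        = 2 * (Real.pi * (M * ρ ^ (-(j:ℤ)))) := by rw [← heq]; ring
    linarith
  rw [stepA]
  rw [norm_mul]
  have habs2 : ‖(2 / Real.pi : ℂ)‖ = 2 / Real.pi := by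
    rw [show ((2:ℂ) / Real.pi) = ((2 / Real.pi : ℝ) : ℂ) by push_cast; ring,
      Complex.norm_real, Real.norm_eq_abs, abs_of_pos (by positivity)]
  rw [habs2]
  calc 2 / Real.pi * ‖J‖ ≤ 2 / Real.pi * (Real.pi * (M * ρ ^ (-(j:ℤ)))) := by
        apply mul_le_mul_of_nonneg_left hJbound (by positivity)
    _ = 2 * M * ρ ^ (-(j:ℤ)) := by field_simp
end
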